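/- Suppose c_ν ≤ ∏_{m≥1} (1 + K ν_m)^{θ+1} with K ≥ 1, θ ≥ 0, and let (τ_m) be an increasing positive sequence with ∑_m τ_m^{−p} < ∞ for some p > 0. Then for any integer r > 2(θ+1) + 2/p there exists a nonincreasing sequence (ĉ_ν)_{ν∈F} ∈ ℓ^p(F) with c_ν / b_ν^{1/2} ≤ ĉ_ν for all ν ∈ F, where b_ν = ∏_m (∑_{l=0}^r C(ν_m, l) τ_m^{2l}). -/

import Mathlib

open scoped BigOperators

lemma box_sum (Q : ℕ → ℕ → ℝ) (s : Finset ℕ) (t : ℕ → Finset ℕ) :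
    ∑ ν ∈ s.finsupp t, ∏ m ∈ s, Q m (ν m) = ∏ m ∈ s, ∑ n ∈ t m, Q m n := by
  classical
  rw [Finset.prod_sum]
  refine Finset.sum_nbij' (i := fun ν => fun m _ => ν m)
    (j := fun p => Finsupp.indicator s p) ?_ ?_ ?_ ?_ ?_
  · intro ν hν
    rw [Finset.mem_finsupp_iff] at hν
    exact Finset.mem_pi.2 fun m hm => hν.2 m hm
  · intro p hp
    rw [Finset.mem_finsupp_iff]
    refine ⟨Finsupp.support_indicator_subset _ _, fun m hm => ?_⟩
    rw [Finsupp.indicator_of_mem hm]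
    exact Finset.mem_pi.1 hp m hm
  · intro ν hν
    rw [Finset.mem_finsupp_iff] at hν
    ext m
    by_cases hm : m ∈ s
    · rw [Finsupp.indicator_of_mem hm]
    · rw [Finsupp.indicator_of_notMem hm]
      exact (Finsupp.notMem_support_iff.1 fun H => hm (hν.1 H)).symm
  · intro p hp
    funext m hm
    exact Finsupp.indicator_of_mem hm p
  · intro ν hν
    rw [← Finset.prod_attach s (fun m => Q m (ν m))]

lemma summable_prod_support
    (q : ℕ → ℕ → ℝ) (hq : ∀ m n, 0 ≤ q m n)
    (u : ℕ → ℝ) (hu : ∀ m, 0 ≤ u m)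
    (hqu : ∀ m L, ∑ i ∈ Finset.range L, q m (i + 1) ≤ u m)
    (husum : Summable u) :
    Summable (fun ν : ℕ →₀ ℕ => ∏ m ∈ ν.support, q m (ν m)) := by
  classical
  set Q : ℕ → ℕ → ℝ := fun m n => if n = 0 then 1 else q m n with hQdef
  have hQ0 : ∀ m n, 0 ≤ Q m n := by
    intro m n
    by_cases h : n = 0 <;> simp [hQdef, h, hq]
  refine summable_of_sum_le (c := Real.exp (∑' m, u m))
    (fun ν => Finset.prod_nonneg fun m _ => hq m (ν m)) ?_
  intro S
  set M := (S.sup fun ν => ν.support.sup id) + 1 with hM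
  set L := S.sup fun ν => ν.support.sup ν with hL
  have hsub : S ⊆ (Finset.range M).finsupp fun _ => Finset.range (L + 1) := by
    intro ν hν
    rw [Finset.mem_finsupp_iff]
    constructor
    · intro m hm
      rw [Finset.mem_range, hM, Nat.lt_add_one_iff]
      exact le_trans (Finset.le_sup (f := id) hm)
        (Finset.le_sup (f := fun ν : ℕ →₀ ℕ => ν.support.sup id) hν)
    · intro m _
      rw [Finset.mem_range, Nat.lt_add_one_iff]
      by_cases hm : m ∈ ν.support
      · exact le_trans (Finset.le_sup (f := fun m => ν m) hm)
          (Finset.le_sup (f := fun ν : ℕ →₀ ℕ => ν.support.sup ν) hν)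
      · rw [Finsupp.notMem_support_iff.1 hm]; exact Nat.zero_le _
  have hprodQ : ∀ ν : ℕ →₀ ℕ, ν ∈ (Finset.range M).finsupp (fun _ => Finset.range (L + 1)) →
      ∏ m ∈ ν.support, q m (ν m) = ∏ m ∈ Finset.range M, Q m (ν m) := by
    intro ν hν
    rw [Finset.mem_finsupp_iff] at hν
    have h1 : ∏ m ∈ ν.support, q m (ν m) = ∏ m ∈ ν.support, Q m (ν m) := by
      refine Finset.prod_congr rfl fun m hm => ?_
      rw [hQdef]
      simp [Finsupp.mem_support_iff.1 hm]
    rw [h1]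
    refine Finset.prod_subset hν.1 fun m _ hm => ?_
    rw [Finsupp.notMem_support_iff.1 hm]
    simp [hQdef]
  calc ∑ ν ∈ S, ∏ m ∈ ν.support, q m (ν m)
      ≤ ∑ ν ∈ (Finset.range M).finsupp fun _ => Finset.range (L + 1),
          ∏ m ∈ ν.support, q m (ν m) :=
        Finset.sum_le_sum_of_subset_of_nonneg hsub
          (fun ν _ _ => Finset.prod_nonneg fun m _ => hq m (ν m))
    _ = ∑ ν ∈ (Finset.range M).finsupp fun _ => Finset.range (L + 1),
          ∏ m ∈ Finset.range M, Q m (ν m) := Finset.sum_congr rfl hprodQ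
    _ = ∏ m ∈ Finset.range M, ∑ n ∈ Finset.range (L + 1), Q m n := box_sum ..
    _ ≤ ∏ m ∈ Finset.range M, Real.exp (u m) := by
        refine Finset.prod_le_prod (fun m _ => Finset.sum_nonneg fun n _ => hQ0 m n)
          (fun m _ => ?_)
        rw [Finset.sum_range_succ']
        have h1 : ∑ i ∈ Finset.range L, Q m (i + 1) = ∑ i ∈ Finset.range L, q m (i + 1) :=
          Finset.sum_congr rfl fun i _ => by simp [hQdef]
        have h2 : Q m 0 = 1 := by simp [hQdef]
        rw [h1, h2]
        calc ∑ i ∈ Finset.range L, q m (i + 1) + 1 ≤ u m + 1 := by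
              have := hqu m L; linarith
          _ ≤ Real.exp (u m) := Real.add_one_le_exp _
    _ = Real.exp (∑ m ∈ Finset.range M, u m) := by rw [Real.exp_sum]
    _ ≤ Real.exp (∑' m, u m) := Real.exp_le_exp.2 (Summable.sum_le_tsum _ (fun m _ => hu m) husum)

lemma sqrt_prod' (s : Finset ℕ) (f : ℕ → ℝ) (h : ∀ i ∈ s, 0 ≤ f i) :
    Real.sqrt (∏ i ∈ s, f i) = ∏ i ∈ s, Real.sqrt (f i) := by
  induction s using Finset.cons_induction with
  | empty => simp
  | cons a s ha ih =>
    rw [Finset.prod_cons, Finset.prod_cons, Real.sqrt_mul (h a (Finset.mem_cons_self a s)),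
      ih fun i hi => h i (Finset.mem_cons.2 (Or.inr hi))]

set_option maxHeartbeats 2000000 in
/-- Construction of a nonincreasing `ℓ^p` majorant: if
`c_ν ≤ ∏_m (1 + K ν_m)^{θ+1}` with `K ≥ 1`, `θ ≥ 0`, and `(τ_m)` is an
increasing positive sequence with `∑ τ_m^{−p} < ∞`, then for any integer
`r > 2(θ+1) + 2/p` there is a nonincreasing `(ĉ_ν) ∈ ℓ^p` with
`c_ν / √b_ν ≤ ĉ_ν`, where `b_ν = ∏_m ∑_{l=0}^r C(ν_m, l) τ_m^{2l}`. -/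
theorem exists_nonincreasing_lp_majorant
    (c : (ℕ →₀ ℕ) → ℝ) (K θ : ℝ) (hK : 1 ≤ K) (hθ : 0 ≤ θ)
    (hc : ∀ ν : ℕ →₀ ℕ, c ν ≤ ∏ m ∈ ν.support, (1 + K * (ν m : ℝ)) ^ (θ + 1))
    (τ : ℕ → ℝ) (hτpos : ∀ m, 0 < τ m) (hτmono : Monotone τ)
    (p : ℝ) (hp : 0 < p) (hτsum : Summable fun m => τ m ^ (-p))
    (r : ℕ) (hr : 2 * (θ + 1) + 2 / p < (r : ℝ)) :
    ∃ chat : (ℕ →₀ ℕ) → ℝ,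
      (∀ ν, 0 ≤ chat ν) ∧
      (∀ ν₁ ν₂ : ℕ →₀ ℕ, ν₁ ≤ ν₂ → chat ν₂ ≤ chat ν₁) ∧
      (Summable fun ν => chat ν ^ p) ∧
      ∀ ν : ℕ →₀ ℕ,
        c ν / Real.sqrt (∏ m ∈ ν.support,
          ∑ l ∈ Finset.range (r + 1), (Nat.choose (ν m) l : ℝ) * τ m ^ (2 * l)) ≤
        chat ν := by
  classical
  have hKpos : 0 < K := lt_of_lt_of_le one_pos hK
  set s : ℝ := (r : ℝ) / 2 - (θ + 1) with hs_def
  have h2p : 2 / p = 2 * (1 / p) := by ring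
  have hs : 1 / p < s := by
    rw [hs_def]
    rw [h2p] at hr
    linarith
  have h1p : (0:ℝ) < 1 / p := by positivity
  have hspos : 0 < s := lt_trans h1p hs
  have hsp1 : 1 < s * p := by
    have := (div_lt_iff₀ hp).1 hs
    linarith
  have hrR : (0:ℝ) < (r:ℝ) := by
    have h1 : (0:ℝ) < 2 * (θ + 1) + 2 / p := by positivity
    linarith
  have hr0 : 0 < r := by exact_mod_cast hrR
  have hr1 : 1 ≤ r := hr0
  set Mx : ℝ := max 1 (τ 0)⁻¹ with hMx_def
  have hMx1 : 1 ≤ Mx := le_max_left _ _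
  have hMx0 : 0 ≤ Mx := le_trans zero_le_one hMx1
  have hMxm : ∀ m, (τ m)⁻¹ ≤ Mx := fun m =>
    le_trans (inv_anti₀ (hτpos 0) (hτmono (Nat.zero_le m))) (le_max_right _ _)
  set A0 : ℝ := (2 * K) ^ (θ + 1) * (r : ℝ) ^ (r : ℕ) with hA0_def
  set A1 : ℝ := (1 + K * (r:ℝ)) ^ (θ + 1) * (r : ℝ) ^ s with hA1_def
  set A : ℝ := A0 * Mx ^ (r : ℕ) + A1 with hA_def
  have hA0 : 0 ≤ A0 :=
    mul_nonneg (Real.rpow_nonneg (by linarith) _) (pow_nonneg (Nat.cast_nonneg r) _)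
  have hA1 : 0 ≤ A1 := by
    have : (0:ℝ) ≤ 1 + K * (r:ℝ) := by positivity
    exact mul_nonneg (Real.rpow_nonneg this _) (Real.rpow_nonneg (Nat.cast_nonneg r) _)
  have hA1A : A1 ≤ A := le_add_of_nonneg_left (mul_nonneg hA0 (pow_nonneg hMx0 _))
  have hA0A : A0 * Mx ^ (r:ℕ) ≤ A := le_add_of_nonneg_right hA1
  have hA : 0 ≤ A := le_trans hA1 hA1A
  -- the tail index N with τ m ≥ A beyond it
  obtain ⟨N, hN⟩ : ∃ N, ∀ m, N ≤ m → A ≤ τ m := by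
    set B : ℝ := max A 1 with hB_def
    have hB0 : 0 < B := lt_of_lt_of_le one_pos (le_max_right _ _)
    have htend : Filter.Tendsto (fun m => τ m ^ (-p)) Filter.atTop (nhds 0) :=
      hτsum.tendsto_atTop_zero
    have hev : ∀ᶠ m in Filter.atTop, τ m ^ (-p) < B ^ (-p) :=
      htend.eventually_lt_const (Real.rpow_pos_of_pos hB0 _)
    obtain ⟨N, hN'⟩ := Filter.eventually_atTop.1 hev
    refine ⟨N, fun m hm => ?_⟩
    by_contra hcon
    push_neg at hcon
    have hτB : τ m ≤ B := le_trans hcon.le (le_max_left _ _)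
    have hmono := Real.rpow_le_rpow_of_nonpos (hτpos m) hτB (neg_nonpos.2 hp.le)
    exact absurd (hN' m hm) (not_lt.2 hmono)
  set H1 : ℝ := max 1 (A * Mx) with hH1_def
  have hH1 : 1 ≤ H1 := le_max_left _ _
  have hH10 : 0 ≤ H1 := le_trans zero_le_one hH1
  set C : ℝ := H1 ^ N with hC_def
  have hC1 : (1:ℝ) ≤ C := by
    calc (1:ℝ) = 1 ^ N := (one_pow N).symm
    _ ≤ H1 ^ N := pow_le_pow_left₀ zero_le_one hH1 N
  have hC0 : 0 ≤ C := le_trans zero_le_one hC1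
  set g : ℕ → ℕ → ℝ := fun m n => A * (τ m)⁻¹ * (n : ℝ) ^ (-s) with hg_def
  have hg0 : ∀ m n, 0 ≤ g m n := fun m n =>
    mul_nonneg (mul_nonneg hA (inv_nonneg.2 (hτpos m).le)) (Real.rpow_nonneg (Nat.cast_nonneg n) _)
  set φ : ℕ → ℕ → ℝ := fun m n => min 1 (g m n) with hφ_def
  have hφ0 : ∀ m n, 0 ≤ φ m n := fun m n => le_min zero_le_one (hg0 m n)
  have hφ1 : ∀ m n, φ m n ≤ 1 := fun m n => min_le_left _ _
  have hφg : ∀ m n, φ m n ≤ g m n := fun m n => min_le_right _ _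
  have hφanti : ∀ m (n₁ n₂ : ℕ), 1 ≤ n₁ → n₁ ≤ n₂ → φ m n₂ ≤ φ m n₁ := by
    intro m n₁ n₂ h1 h12
    refine min_le_min le_rfl ?_
    refine mul_le_mul_of_nonneg_left ?_ (mul_nonneg hA (inv_nonneg.2 (hτpos m).le))
    refine Real.rpow_le_rpow_of_nonpos ?_ ?_ (neg_nonpos.2 hspos.le)
    · exact_mod_cast lt_of_lt_of_le zero_lt_one (by exact_mod_cast h1)
    · exact_mod_cast h12
  set b : ℕ → ℕ → ℝ :=
    fun m n => ∑ l ∈ Finset.range (r + 1), (Nat.choose n l : ℝ) * τ m ^ (2 * l) with hb_def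
  have hbterm : ∀ m n, ∀ l ∈ Finset.range (r + 1), 0 ≤ (Nat.choose n l : ℝ) * τ m ^ (2 * l) :=
    fun m n l _ => mul_nonneg (Nat.cast_nonneg _) (pow_nonneg (hτpos m).le _)
  have hbsingle : ∀ m n l, l ≤ r → (Nat.choose n l : ℝ) * τ m ^ (2 * l) ≤ b m n := by
    intro m n l hl
    exact Finset.single_le_sum (hbterm m n) (Finset.mem_range.2 (Nat.lt_succ_of_le hl))
  have hb1 : ∀ m n, 1 ≤ b m n := by
    intro m n
    have := hbsingle m n 0 (Nat.zero_le r)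
    simpa using this
  have hb0 : ∀ m n, 0 ≤ b m n := fun m n => le_trans zero_le_one (hb1 m n)
  have hsq0 : ∀ m n, 0 ≤ Real.sqrt (b m n) := fun m n => Real.sqrt_nonneg _
  -- the key analytic inequality
  have key : ∀ (m n : ℕ), 1 ≤ n →
      (1 + K * (n:ℝ)) ^ (θ + 1) * ((n : ℝ) ^ s * τ m) ≤ A * Real.sqrt (b m n) := by
    intro m n hn
    have hτm := hτpos m
    have hn0 : (0:ℝ) < (n:ℝ) := by exact_mod_cast hn
    have hbase : (0:ℝ) ≤ 1 + K * (n:ℝ) := by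
      have : (0:ℝ) ≤ K * n := mul_nonneg hKpos.le (Nat.cast_nonneg n)
      linarith
    rcases le_total n r with hnr | hnr
    · -- small n : use the l = 1 term
      have hτsq : τ m ^ 2 ≤ b m n := by
        have h1 := hbsingle m n 1 hr1
        rw [Nat.choose_one_right] at h1
        have h2 : τ m ^ (2 * 1) = τ m ^ 2 := by norm_num
        rw [h2] at h1
        have hn1 : (1:ℝ) ≤ (n:ℝ) := by exact_mod_cast hn
        nlinarith [sq_nonneg (τ m), hn1, h1]
      have hτsqrt : τ m ≤ Real.sqrt (b m n) := by
        rw [show τ m = Real.sqrt (τ m ^ 2) from (Real.sqrt_sq hτm.le).symm]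
        exact Real.sqrt_le_sqrt hτsq
      calc (1 + K * (n:ℝ)) ^ (θ + 1) * ((n : ℝ) ^ s * τ m)
          ≤ (1 + K * (r:ℝ)) ^ (θ + 1) * ((r : ℝ) ^ s * τ m) := by
            have hc1 : (1 + K * (n:ℝ)) ^ (θ + 1) ≤ (1 + K * (r:ℝ)) ^ (θ + 1) := by
              refine Real.rpow_le_rpow hbase ?_ (by linarith)
              have hnr' : (n:ℝ) ≤ (r:ℝ) := by exact_mod_cast hnr
              have := mul_le_mul_of_nonneg_left hnr' hKpos.le
              linarith
            have hc2 : (n:ℝ) ^ s ≤ (r:ℝ) ^ s :=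
              Real.rpow_le_rpow hn0.le (by exact_mod_cast hnr) hspos.le
            have h01 : (0:ℝ) ≤ (n:ℝ) ^ s := Real.rpow_nonneg hn0.le _
            have h02 : (0:ℝ) ≤ (1 + K * (r:ℝ)) ^ (θ + 1) :=
              Real.rpow_nonneg (by positivity) _
            refine mul_le_mul hc1 (mul_le_mul_of_nonneg_right hc2 hτm.le)
              (mul_nonneg h01 hτm.le) h02
        _ = A1 * τ m := by rw [hA1_def]; ring
        _ ≤ A1 * Real.sqrt (b m n) := mul_le_mul_of_nonneg_left hτsqrt hA1
        _ ≤ A * Real.sqrt (b m n) := mul_le_mul_of_nonneg_right hA1A (hsq0 m n)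
    · -- large n : use the l = r term
      have hNat : n ^ r ≤ r ^ (2 * r) * Nat.choose n r := by
        obtain ⟨d, rfl⟩ := Nat.exists_eq_add_of_le hnr
        have h2 : r + d + 1 - r = d + 1 := by omega
        have h1 : r + d ≤ r * (r + d + 1 - r) := by
          rw [h2, Nat.mul_add, Nat.mul_one]
          have := Nat.le_mul_of_pos_left d hr0
          omega
        calc (r + d) ^ r ≤ (r * (r + d + 1 - r)) ^ r := Nat.pow_le_pow_left h1 r
          _ = r ^ r * (r + d + 1 - r) ^ r := mul_pow ..
          _ ≤ r ^ r * Nat.descFactorial (r + d) r :=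
            Nat.mul_le_mul_left _ (Nat.pow_sub_le_descFactorial _ _)
          _ = r ^ r * (r.factorial * Nat.choose (r + d) r) := by
            rw [Nat.descFactorial_eq_factorial_mul_choose]
          _ ≤ r ^ r * (r ^ r * Nat.choose (r + d) r) :=
            Nat.mul_le_mul_left _ (Nat.mul_le_mul_right _ (Nat.factorial_le_pow r))
          _ = r ^ (2 * r) * Nat.choose (r + d) r := by rw [← mul_assoc, ← pow_add, two_mul]
      have hcast : ((n:ℝ)) ^ r ≤ (r:ℝ) ^ (2 * r) * (Nat.choose n r : ℝ) := by
        exact_mod_cast hNat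
      have hbC := hbsingle m n r le_rfl
      have h6 : Real.sqrt ((n:ℝ) ^ r) ≤ (r:ℝ) ^ r * Real.sqrt (Nat.choose n r : ℝ) := by
        have hrr : ((r:ℝ) ^ r : ℝ) = Real.sqrt ((r:ℝ) ^ (2 * r)) := by
          rw [two_mul, pow_add, Real.sqrt_mul_self (by positivity : (0:ℝ) ≤ (r:ℝ) ^ r)]
        rw [hrr, ← Real.sqrt_mul (by positivity)]
        exact Real.sqrt_le_sqrt hcast
      have h5 : Real.sqrt ((n:ℝ) ^ r) * τ m ^ r ≤ (r:ℝ) ^ r * Real.sqrt (b m n) := by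
        calc Real.sqrt ((n:ℝ) ^ r) * τ m ^ r
            ≤ ((r:ℝ) ^ r * Real.sqrt (Nat.choose n r : ℝ)) * τ m ^ r :=
              mul_le_mul_of_nonneg_right h6 (pow_nonneg hτm.le r)
          _ = (r:ℝ) ^ r * (Real.sqrt (Nat.choose n r : ℝ) * Real.sqrt ((τ m ^ r) ^ 2)) := by
              rw [Real.sqrt_sq (pow_nonneg hτm.le r)]; ring
          _ = (r:ℝ) ^ r * Real.sqrt ((Nat.choose n r : ℝ) * τ m ^ (2 * r)) := by
              rw [← Real.sqrt_mul (Nat.cast_nonneg _), ← pow_mul, mul_comm r 2]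
          _ ≤ (r:ℝ) ^ r * Real.sqrt (b m n) :=
              mul_le_mul_of_nonneg_left (Real.sqrt_le_sqrt hbC) (by positivity)
      have hnhalf : Real.sqrt ((n:ℝ) ^ r) = (n:ℝ) ^ (s + (θ + 1)) := by
        rw [Real.sqrt_eq_rpow, ← Real.rpow_natCast (n:ℝ) r, ← Real.rpow_mul hn0.le]
        congr 1
        rw [hs_def]; ring
      have h2K : (1 + K * (n:ℝ)) ^ (θ + 1) ≤ (2 * K) ^ (θ + 1) * (n:ℝ) ^ (θ + 1) := by
        rw [← Real.mul_rpow (by positivity) hn0.le]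
        refine Real.rpow_le_rpow hbase ?_ (by linarith)
        have hn1 : (1:ℝ) ≤ (n:ℝ) := by exact_mod_cast hn
        have hKn : (1:ℝ) ≤ K * n := by
          calc (1:ℝ) = 1 * 1 := by ring
          _ ≤ K * n := mul_le_mul hK hn1 zero_le_one hKpos.le
        linarith
      have hτMx : τ m ≤ Mx ^ r * τ m ^ r := by
        have h1 : (1:ℝ) ≤ Mx * τ m := by
          calc (1:ℝ) = (τ m)⁻¹ * τ m := (inv_mul_cancel₀ hτm.ne').symm
          _ ≤ Mx * τ m := mul_le_mul_of_nonneg_right (hMxm m) hτm.le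
        calc τ m ≤ Mx * τ m := le_mul_of_one_le_left hτm.le hMx1
          _ ≤ (Mx * τ m) ^ r := le_self_pow₀ h1 hr0.ne'
          _ = Mx ^ r * τ m ^ r := mul_pow ..
      have h2Knn : (0:ℝ) ≤ (2 * K) ^ (θ + 1) := Real.rpow_nonneg (by linarith) _
      calc (1 + K * (n:ℝ)) ^ (θ + 1) * ((n : ℝ) ^ s * τ m)
          ≤ ((2 * K) ^ (θ + 1) * (n:ℝ) ^ (θ + 1)) * ((n : ℝ) ^ s * τ m) := by
            refine mul_le_mul_of_nonneg_right h2K ?_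
            exact mul_nonneg (Real.rpow_nonneg hn0.le _) hτm.le
        _ = (2 * K) ^ (θ + 1) * ((n:ℝ) ^ s * (n:ℝ) ^ (θ + 1)) * τ m := by ring
        _ = (2 * K) ^ (θ + 1) * (n:ℝ) ^ (s + (θ + 1)) * τ m := by
            rw [← Real.rpow_add hn0]
        _ ≤ (2 * K) ^ (θ + 1) * (n:ℝ) ^ (s + (θ + 1)) * (Mx ^ r * τ m ^ r) := by
            refine mul_le_mul_of_nonneg_left hτMx ?_
            exact mul_nonneg h2Knn (Real.rpow_nonneg hn0.le _)
        _ = (2 * K) ^ (θ + 1) * Mx ^ r * ((n:ℝ) ^ (s + (θ + 1)) * τ m ^ r) := by ring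
        _ ≤ (2 * K) ^ (θ + 1) * Mx ^ r * ((r:ℝ) ^ r * Real.sqrt (b m n)) := by
            refine mul_le_mul_of_nonneg_left ?_ (mul_nonneg h2Knn (pow_nonneg hMx0 r))
            rw [← hnhalf]; exact h5
        _ = A0 * Mx ^ r * Real.sqrt (b m n) := by rw [hA0_def]; ring
        _ ≤ A * Real.sqrt (b m n) := mul_le_mul_of_nonneg_right hA0A (hsq0 m n)
  -- derived pointwise bound
  have F3 : ∀ (m n : ℕ), 1 ≤ n →
      (1 + K * (n:ℝ)) ^ (θ + 1) ≤ g m n * Real.sqrt (b m n) := by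
    intro m n hn
    have hn0 : (0:ℝ) < (n:ℝ) := by exact_mod_cast hn
    have hden : (0:ℝ) < (n : ℝ) ^ s * τ m :=
      mul_pos (Real.rpow_pos_of_pos hn0 _) (hτpos m)
    have h := (le_div_iff₀ hden).2 (key m n hn)
    calc (1 + K * (n:ℝ)) ^ (θ + 1) ≤ A * Real.sqrt (b m n) / ((n : ℝ) ^ s * τ m) := h
      _ = g m n * Real.sqrt (b m n) := by
          simp only [hg_def]
          rw [Real.rpow_neg hn0.le, div_eq_mul_inv, mul_inv]
          ring
  -- assemble the majorant
  refine ⟨fun ν => C * ∏ m ∈ ν.support, φ m (ν m), ?_, ?_, ?_, ?_⟩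
  · intro ν
    exact mul_nonneg hC0 (Finset.prod_nonneg fun m _ => hφ0 m (ν m))
  · -- nonincreasing
    intro ν₁ ν₂ h12
    have hpt : ∀ m, ν₁ m ≤ ν₂ m := Finsupp.le_def.1 h12
    have hsupp : ν₁.support ⊆ ν₂.support := by
      intro m hm
      rw [Finsupp.mem_support_iff] at hm ⊢
      intro h0
      exact hm (Nat.le_zero.1 (h0 ▸ hpt m))
    refine mul_le_mul_of_nonneg_left ?_ hC0
    calc ∏ m ∈ ν₂.support, φ m (ν₂ m)
        ≤ ∏ m ∈ ν₂.support, (if m ∈ ν₁.support then φ m (ν₁ m) else 1) := by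
          refine Finset.prod_le_prod (fun m _ => hφ0 m (ν₂ m)) (fun m hm => ?_)
          by_cases h : m ∈ ν₁.support
          · rw [if_pos h]
            exact hφanti m (ν₁ m) (ν₂ m)
              (Nat.one_le_iff_ne_zero.2 (Finsupp.mem_support_iff.1 h)) (hpt m)
          · rw [if_neg h]
            exact hφ1 m (ν₂ m)
      _ = ∏ m ∈ ν₁.support, (if m ∈ ν₁.support then φ m (ν₁ m) else 1) :=
          (Finset.prod_subset hsupp fun m _ hm => if_neg hm).symm
      _ = ∏ m ∈ ν₁.support, φ m (ν₁ m) := Finset.prod_congr rfl fun m hm => if_pos hm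
  · -- summability
    have hZsum : Summable (fun i : ℕ => ((i + 1 : ℕ) : ℝ) ^ (-(s * p))) := by
      have h1 : Summable (fun n : ℕ => (n : ℝ) ^ (-(s * p))) :=
        Real.summable_nat_rpow.2 (by linarith)
      exact (summable_nat_add_iff 1).2 h1
    set Z : ℝ := ∑' i : ℕ, ((i + 1 : ℕ) : ℝ) ^ (-(s * p)) with hZ_def
    have hZ0 : 0 ≤ Z := tsum_nonneg fun i => Real.rpow_nonneg (Nat.cast_nonneg _) _
    set u : ℕ → ℝ := fun m => A ^ p * Z * τ m ^ (-p) with hu_def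
    have husum : Summable u := hτsum.mul_left _
    have hu0 : ∀ m, 0 ≤ u m := fun m =>
      mul_nonneg (mul_nonneg (Real.rpow_nonneg hA _) hZ0) (Real.rpow_nonneg (hτpos m).le _)
    have hq0 : ∀ m n, 0 ≤ φ m n ^ p := fun m n => Real.rpow_nonneg (hφ0 m n) _
    have hqu : ∀ m L, ∑ i ∈ Finset.range L, φ m (i + 1) ^ p ≤ u m := by
      intro m L
      have hτm := hτpos m
      have hstep : ∀ i : ℕ,
          φ m (i + 1) ^ p ≤ A ^ p * τ m ^ (-p) * ((i + 1 : ℕ) : ℝ) ^ (-(s * p)) := by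
        intro i
        have hi0 : (0:ℝ) < ((i + 1 : ℕ) : ℝ) := by exact_mod_cast Nat.succ_pos i
        have h1 : φ m (i + 1) ^ p ≤ g m (i + 1) ^ p :=
          Real.rpow_le_rpow (hφ0 m _) (hφg m _) hp.le
        have h2 : g m (i + 1) ^ p = A ^ p * τ m ^ (-p) * ((i + 1 : ℕ) : ℝ) ^ (-(s * p)) := by
          simp only [hg_def]
          rw [Real.mul_rpow (mul_nonneg hA (inv_nonneg.2 hτm.le)) (Real.rpow_nonneg hi0.le _),
            Real.mul_rpow hA (inv_nonneg.2 hτm.le),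
            Real.inv_rpow hτm.le, ← Real.rpow_neg hτm.le,
            ← Real.rpow_mul hi0.le, neg_mul]
        exact h2 ▸ h1
      calc ∑ i ∈ Finset.range L, φ m (i + 1) ^ p
          ≤ ∑ i ∈ Finset.range L, A ^ p * τ m ^ (-p) * ((i + 1 : ℕ) : ℝ) ^ (-(s * p)) :=
            Finset.sum_le_sum fun i _ => hstep i
        _ = A ^ p * τ m ^ (-p) * ∑ i ∈ Finset.range L, ((i + 1 : ℕ) : ℝ) ^ (-(s * p)) := by
            rw [Finset.mul_sum]
        _ ≤ A ^ p * τ m ^ (-p) * Z := by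
            refine mul_le_mul_of_nonneg_left ?_
              (mul_nonneg (Real.rpow_nonneg hA _) (Real.rpow_nonneg hτm.le _))
            exact Summable.sum_le_tsum _ (fun i _ => Real.rpow_nonneg (Nat.cast_nonneg _) _) hZsum
        _ = u m := by simp only [hu_def]; ring
    have hqsum := summable_prod_support _ hq0 u hu0 hqu husum
    refine (hqsum.mul_left (C ^ p)).congr fun ν => ?_
    rw [Real.finset_prod_rpow _ _ (fun m _ => hφ0 m (ν m)) p,
      ← Real.mul_rpow hC0 (Finset.prod_nonneg fun m _ => hφ0 m (ν m))]
  · -- domination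
    intro ν
    set Bb : ℝ := ∏ m ∈ ν.support, b m (ν m) with hBb_def
    have hB1 : (1:ℝ) ≤ Bb := by
      rw [hBb_def]
      calc (1:ℝ) = ∏ _m ∈ ν.support, (1:ℝ) := by simp
        _ ≤ ∏ m ∈ ν.support, b m (ν m) :=
          Finset.prod_le_prod (fun m _ => zero_le_one) (fun m _ => hb1 m (ν m))
    have hBpos : 0 < Real.sqrt Bb := Real.sqrt_pos.2 (lt_of_lt_of_le one_pos hB1)
    rw [div_le_iff₀ hBpos]
    have F5 : ∀ m ∈ ν.support,
        (1 + K * (ν m : ℝ)) ^ (θ + 1) ≤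
          ((if m < N then H1 else 1) * φ m (ν m)) * Real.sqrt (b m (ν m)) := by
      intro m hm
      have hn : 1 ≤ ν m := Nat.one_le_iff_ne_zero.2 (Finsupp.mem_support_iff.1 hm)
      have h3 := F3 m (ν m) hn
      have hn1 : (1:ℝ) ≤ ((ν m : ℕ) : ℝ) := by exact_mod_cast hn
      have hτm := hτpos m
      have hgA : g m (ν m) ≤ A * (τ m)⁻¹ := by
        have hx : ((ν m : ℕ) : ℝ) ^ (-s) ≤ 1 :=
          Real.rpow_le_one_of_one_le_of_nonpos hn1 (neg_nonpos.2 hspos.le)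
        calc g m (ν m) = A * (τ m)⁻¹ * ((ν m : ℕ) : ℝ) ^ (-s) := rfl
          _ ≤ A * (τ m)⁻¹ * 1 :=
            mul_le_mul_of_nonneg_left hx (mul_nonneg hA (inv_nonneg.2 hτm.le))
          _ = A * (τ m)⁻¹ := mul_one _
      have h4 : (1 + K * (ν m : ℝ)) ^ (θ + 1) ≤ (A * (τ m)⁻¹) * Real.sqrt (b m (ν m)) :=
        le_trans h3 (mul_le_mul_of_nonneg_right hgA (hsq0 m (ν m)))
      by_cases hmN : m < N
      · rw [if_pos hmN]
        rcases le_total (g m (ν m)) 1 with hg1 | hg1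
        · have hφeq : φ m (ν m) = g m (ν m) := min_eq_right hg1
          rw [hφeq]
          calc (1 + K * (ν m : ℝ)) ^ (θ + 1) ≤ g m (ν m) * Real.sqrt (b m (ν m)) := h3
            _ ≤ (H1 * g m (ν m)) * Real.sqrt (b m (ν m)) := by
                refine mul_le_mul_of_nonneg_right ?_ (hsq0 m (ν m))
                exact le_mul_of_one_le_left (hg0 m (ν m)) hH1
        · have hφeq : φ m (ν m) = 1 := min_eq_left hg1
          rw [hφeq, mul_one]
          calc (1 + K * (ν m : ℝ)) ^ (θ + 1)
              ≤ (A * (τ m)⁻¹) * Real.sqrt (b m (ν m)) := h4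
            _ ≤ (A * Mx) * Real.sqrt (b m (ν m)) :=
                mul_le_mul_of_nonneg_right
                  (mul_le_mul_of_nonneg_left (hMxm m) hA) (hsq0 m (ν m))
            _ ≤ H1 * Real.sqrt (b m (ν m)) :=
                mul_le_mul_of_nonneg_right (le_max_right _ _) (hsq0 m (ν m))
      · rw [if_neg hmN, one_mul]
        have hAτ : A * (τ m)⁻¹ ≤ 1 := by
          rw [← div_eq_mul_inv]
          exact (div_le_one hτm).2 (hN m (le_of_not_gt hmN))
        rcases le_total (g m (ν m)) 1 with hg1 | hg1
        · have hφeq : φ m (ν m) = g m (ν m) := min_eq_right hg1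
          rw [hφeq]
          exact h3
        · have hφeq : φ m (ν m) = 1 := min_eq_left hg1
          rw [hφeq, one_mul]
          calc (1 + K * (ν m : ℝ)) ^ (θ + 1)
              ≤ (A * (τ m)⁻¹) * Real.sqrt (b m (ν m)) := h4
            _ ≤ 1 * Real.sqrt (b m (ν m)) :=
                mul_le_mul_of_nonneg_right hAτ (hsq0 m (ν m))
            _ = Real.sqrt (b m (ν m)) := one_mul _
    have hprod_w : (∏ m ∈ ν.support, (if m < N then H1 else 1)) ≤ C := by
      have h1 : (∏ m ∈ ν.support, (if m < N then H1 else 1)) =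
          ∏ m ∈ ν.support.filter (· < N), H1 := (Finset.prod_filter _ _).symm
      rw [h1, Finset.prod_const]
      have hcard : (ν.support.filter (· < N)).card ≤ N := by
        have hsub2 : ν.support.filter (· < N) ⊆ Finset.range N := by
          intro x hx
          rw [Finset.mem_range]
          exact (Finset.mem_filter.1 hx).2
        calc (ν.support.filter (· < N)).card ≤ (Finset.range N).card :=
              Finset.card_le_card hsub2
          _ = N := Finset.card_range N
      exact pow_le_pow_right₀ hH1 hcard
    calc c ν ≤ ∏ m ∈ ν.support, (1 + K * (ν m : ℝ)) ^ (θ + 1) := hc ν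
      _ ≤ ∏ m ∈ ν.support,
            (((if m < N then H1 else 1) * φ m (ν m)) * Real.sqrt (b m (ν m))) := by
          refine Finset.prod_le_prod (fun m _ => ?_) F5
          have h0 : (0:ℝ) ≤ K * (ν m : ℝ) := mul_nonneg hKpos.le (Nat.cast_nonneg _)
          exact Real.rpow_nonneg (by linarith) _
      _ = (∏ m ∈ ν.support, ((if m < N then H1 else 1) * φ m (ν m))) *
            ∏ m ∈ ν.support, Real.sqrt (b m (ν m)) := Finset.prod_mul_distrib
      _ = ((∏ m ∈ ν.support, (if m < N then H1 else 1)) * ∏ m ∈ ν.support, φ m (ν m)) *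
            ∏ m ∈ ν.support, Real.sqrt (b m (ν m)) := by rw [Finset.prod_mul_distrib]
      _ ≤ (C * ∏ m ∈ ν.support, φ m (ν m)) * ∏ m ∈ ν.support, Real.sqrt (b m (ν m)) := by
          refine mul_le_mul_of_nonneg_right
            (mul_le_mul_of_nonneg_right hprod_w ?_) ?_
          · exact Finset.prod_nonneg fun m _ => hφ0 m (ν m)
          · exact Finset.prod_nonneg fun m _ => hsq0 m (ν m)
      _ = (C * ∏ m ∈ ν.support, φ m (ν m)) * Real.sqrt Bb := by
          rw [hBb_def, sqrt_prod' _ _ fun m _ => hb0 m (ν m)]
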